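/- Let Q : [0,1]² → ℝ be a nonnegative bivariate trigonometric polynomial of degree at most N in each variable, and let M > 4πN. Then sup over [0,1]² of Q is at most (1 - 4πN/M)⁻¹ times the maximum of Q over the uniform grid {(l₁/M, l₂/M) : l₁, l₂ ∈ {0,...,M-1}}. -/

import Mathlib

open Finset

noncomputable def sEm (m : ℤ) (s : ℝ) : ℂ := Complex.exp (2 * Real.pi * Complex.I * m * s)

lemma sEm_mul (m n : ℤ) (s : ℝ) : sEm m s * sEm n s = sEm (m + n) s := by
  rw [sEm, sEm, sEm, ← Complex.exp_add]
  push_cast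
  ring_nf

lemma sEm_sub (m : ℤ) (t τ : ℝ) : sEm m (t - τ) = sEm m t * sEm (-m) τ := by
  rw [sEm, sEm, sEm, ← Complex.exp_add]
  push_cast
  ring_nf

lemma sEm_integral (m : ℤ) : (∫ t in (0:ℝ)..1, sEm m t) = if m = 0 then 1 else 0 := by
  rcases eq_or_ne m 0 with h | h
  · simp [h, sEm]
  · set c : ℂ := 2 * Real.pi * Complex.I * m with hcdef
    have hc : c ≠ 0 := by
      simp [hcdef, Real.pi_ne_zero, Complex.I_ne_zero, h]
    have key : ∀ x ∈ Set.uIcc (0:ℝ) 1, HasDerivAt (fun t : ℝ => Complex.exp (c * t) / c) (sEm m x) x := by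
      intro x _
      have h1 : HasDerivAt (fun t : ℝ => (t : ℂ)) 1 x := Complex.ofRealCLM.hasDerivAt
      have h2 := ((h1.const_mul c).cexp).div_const c
      simp only [mul_one] at h2
      rw [mul_div_cancel_right₀ _ hc] at h2
      rw [sEm]; exact h2
    have hint : IntervalIntegrable (sEm m) MeasureTheory.volume 0 1 := by
      apply Continuous.intervalIntegrable
      exact Complex.continuous_exp.comp (by fun_prop)
    rw [intervalIntegral.integral_eq_sub_of_hasDerivAt key hint]
    have h1 : Complex.exp (c * ((1:ℝ):ℂ)) = 1 := by
      rw [hcdef, show (2 * (Real.pi:ℂ) * Complex.I * m * ((1:ℝ):ℂ)) = m * (2 * Real.pi * Complex.I) by push_cast; ring]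
      exact Complex.exp_int_mul_two_pi_mul_I m
    simp only [Complex.ofReal_one, Complex.ofReal_zero, mul_zero, Complex.exp_zero] at *
    rw [h1]
    simp [h]


lemma sEm_cont (m : ℤ) : Continuous (sEm m) :=
  Complex.continuous_exp.comp (by fun_prop)

noncomputable def sDD (N : ℕ) (s : ℝ) : ℂ := ∑ j ∈ range N, sEm j s
noncomputable def sFF (N : ℕ) (s : ℝ) : ℝ := (1 / N) * Complex.normSq (sDD N s)
noncomputable def sGG (N : ℕ) (s : ℝ) : ℝ := 2 * Real.sin (2 * Real.pi * N * s) * sFF N s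

lemma sFF_nonneg (N : ℕ) (s : ℝ) : 0 ≤ sFF N s := by
  apply mul_nonneg (by positivity) (Complex.normSq_nonneg _)

lemma sGG_abs_le (N : ℕ) (s : ℝ) : |sGG N s| ≤ 2 * sFF N s := by
  rw [sGG, abs_mul, abs_mul]
  calc |2| * |Real.sin (2 * Real.pi * N * s)| * |sFF N s|
      ≤ |2| * 1 * |sFF N s| := by
        gcongr
        exact Real.abs_sin_le_one _
    _ = 2 * sFF N s := by rw [abs_of_nonneg (sFF_nonneg N s)]; norm_num

lemma sFF_cont (N : ℕ) : Continuous (sFF N) := by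
  apply Continuous.mul continuous_const
  apply Complex.continuous_normSq.comp
  apply continuous_finset_sum
  intro j _
  exact Complex.continuous_exp.comp (by fun_prop)

lemma sGG_cont (N : ℕ) : Continuous (sGG N) := by
  apply Continuous.mul (by fun_prop) (sFF_cont N)

lemma sGG_expand (N : ℕ) (s : ℝ) : (sGG N s : ℂ) =
    -(Complex.I / N) * ∑ j ∈ range N, ∑ j' ∈ range N,
      (sEm ((N:ℤ) + j - j') s - sEm (-(N:ℤ) + j - j') s) := by
  have hsin : ((Real.sin (2 * Real.pi * N * s) : ℂ)) =
      (sEm N s - sEm (-(N:ℤ)) s) * Complex.I / (-2) := by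
    rw [Complex.ofReal_sin, Complex.sin]
    push_cast [sEm]
    ring_nf
  have hconj : (starRingEnd ℂ) (sDD N s) = ∑ j' ∈ range N, sEm (-(j':ℤ)) s := by
    rw [sDD, map_sum]
    apply Finset.sum_congr rfl
    intro j' _
    rw [sEm, sEm, ← Complex.exp_conj]
    congr 1
    simp only [map_mul, Complex.conj_I, Complex.conj_ofReal, map_ofNat, map_natCast, map_intCast]
    push_cast
    ring
  have hns : ((sFF N s : ℂ)) = (1 / (N:ℂ)) * (sDD N s * (starRingEnd ℂ) (sDD N s)) := by
    rw [sFF, Complex.mul_conj]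
    push_cast
    ring
  have hdd : sDD N s * (starRingEnd ℂ) (sDD N s)
      = ∑ j ∈ range N, ∑ j' ∈ range N, sEm ((j:ℤ) + -(j':ℤ)) s := by
    rw [hconj, sDD, Finset.sum_mul_sum]
    apply Finset.sum_congr rfl
    intro j _
    apply Finset.sum_congr rfl
    intro j' _
    exact sEm_mul _ _ _
  rw [sGG, Complex.ofReal_mul, Complex.ofReal_mul, hsin, hns, hdd]
  simp only [Finset.mul_sum]
  apply Finset.sum_congr rfl
  intro j _
  apply Finset.sum_congr rfl
  intro j' _
  have e1 : sEm (N:ℤ) s * sEm ((j:ℤ) + -(j':ℤ)) s = sEm ((N:ℤ) + j - j') s := by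
    rw [sEm_mul]; congr 1; ring
  have e2 : sEm (-(N:ℤ)) s * sEm ((j:ℤ) + -(j':ℤ)) s = sEm (-(N:ℤ) + j - j') s := by
    rw [sEm_mul]; congr 1; ring
  push_cast
  linear_combination (-Complex.I/(N:ℂ)) * e1 + (Complex.I/(N:ℂ)) * e2


lemma indSum (N : ℕ) (e : ℤ) : (∑ j' ∈ range N, if ((j':ℤ) = e) then (1:ℂ) else 0)
    = if (0 ≤ e ∧ e < N) then 1 else 0 := by
  rcases le_or_gt 0 e with he | he
  · have h1 : (∑ j' ∈ range N, if ((j':ℤ) = e) then (1:ℂ) else 0)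
        = ∑ j' ∈ range N, if (j' = e.toNat) then (1:ℂ) else 0 := by
      apply Finset.sum_congr rfl
      intro j' _
      exact if_congr (by omega) rfl rfl
    rw [h1, Finset.sum_ite_eq' (range N) e.toNat]
    simp only [Finset.mem_range]
    exact if_congr (by omega) rfl rfl
  · rw [Finset.sum_eq_zero, eq_comm, if_neg (by omega)]
    intro j' _
    rw [if_neg (by omega)]

lemma countLt (N m : ℕ) : (∑ j ∈ range N, if (j < m) then (1:ℂ) else 0) = ((min m N : ℕ) : ℂ) := by
  induction N with
  | zero => simp
  | succ n ih =>
    rw [Finset.sum_range_succ, ih]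
    by_cases h : n < m
    · rw [if_pos h]
      have : min m (n+1) = min m n + 1 := by omega
      rw [this]; push_cast; ring
    · rw [if_neg h]
      have : min m (n+1) = min m n := by omega
      rw [this, add_zero]

lemma countKey (N : ℕ) (k : ℤ) (hk : k ≤ (N:ℤ)) :
    (∑ j ∈ range N, ∑ j' ∈ range N, if ((N:ℤ) + j - j' = k) then (1:ℂ) else 0)
      = (k.toNat : ℂ) := by
  have h1 : ∀ j ∈ range N, (∑ j' ∈ range N, if ((N:ℤ) + j - j' = k) then (1:ℂ) else 0)
      = if ((j:ℤ) < k) then (1:ℂ) else 0 := by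
    intro j hj
    have h2 : (∑ j' ∈ range N, if ((N:ℤ) + j - j' = k) then (1:ℂ) else 0)
        = ∑ j' ∈ range N, if ((j':ℤ) = (N:ℤ) + j - k) then (1:ℂ) else 0 := by
      apply Finset.sum_congr rfl
      intro j' _
      exact if_congr (by omega) rfl rfl
    rw [h2, indSum]
    exact if_congr (by omega) rfl rfl
  rw [Finset.sum_congr rfl h1]
  have h3 : (∑ j ∈ range N, if ((j:ℤ) < k) then (1:ℂ) else 0)
      = ∑ j ∈ range N, if (j < k.toNat) then (1:ℂ) else 0 := by
    apply Finset.sum_congr rfl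
    intro j _
    exact if_congr (by omega) rfl rfl
  rw [h3, countLt]
  congr 1
  omega

noncomputable def sTerm (N : ℕ) (k : ℤ) (τ : ℝ) (j j' : ℕ) (t : ℝ) : ℂ :=
  -(Complex.I/(N:ℂ)) * (sEm (-k + ((N:ℤ)+j-j')) t * sEm (-((N:ℤ)+j-j')) τ
    - sEm (-k + (-(N:ℤ)+j-j')) t * sEm (-(-(N:ℤ)+j-j')) τ)

lemma sTerm_cont (N : ℕ) (k : ℤ) (τ : ℝ) (j j' : ℕ) : Continuous (sTerm N k τ j j') := by
  apply Continuous.mul continuous_const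
  exact ((sEm_cont _).mul continuous_const).sub ((sEm_cont _).mul continuous_const)

lemma sTerm_integral (N : ℕ) (k : ℤ) (τ : ℝ) (j j' : ℕ)
    (hem : ∀ m : ℤ, (∫ t in (0:ℝ)..1, sEm m t) = if m = 0 then 1 else 0) :
    (∫ t in (0:ℝ)..1, sTerm N k τ j j' t)
      = -(Complex.I/(N:ℂ)) * sEm (-k) τ *
          ((if ((N:ℤ)+j-j' = k) then (1:ℂ) else 0) - (if (-(N:ℤ)+j-j' = k) then (1:ℂ) else 0)) := by
  have hi1 : IntervalIntegrable (fun t => sEm (-k + ((N:ℤ)+j-j')) t * sEm (-((N:ℤ)+j-j')) τ)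
      MeasureTheory.volume 0 1 := (((sEm_cont _).mul continuous_const)).intervalIntegrable _ _
  have hi2 : IntervalIntegrable (fun t => sEm (-k + (-(N:ℤ)+j-j')) t * sEm (-(-(N:ℤ)+j-j')) τ)
      MeasureTheory.volume 0 1 := (((sEm_cont _).mul continuous_const)).intervalIntegrable _ _
  rw [show sTerm N k τ j j' = fun t => sTerm N k τ j j' t from rfl]
  simp only [sTerm]
  rw [intervalIntegral.integral_const_mul, intervalIntegral.integral_sub hi1 hi2,
    intervalIntegral.integral_mul_const, intervalIntegral.integral_mul_const, hem, hem]
  by_cases ha : (N:ℤ)+j-j' = k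
  · rw [if_pos (by omega : -k + ((N:ℤ)+j-j') = 0), if_pos ha, ha]
    by_cases hb : -(N:ℤ)+j-j' = k
    · rw [if_pos (by omega : -k + (-(N:ℤ)+j-j') = 0), if_pos hb, hb]; ring
    · rw [if_neg (by omega : ¬(-k + (-(N:ℤ)+j-j') = 0)), if_neg hb]; ring
  · rw [if_neg (by omega : ¬(-k + ((N:ℤ)+j-j') = 0)), if_neg ha]
    by_cases hb : -(N:ℤ)+j-j' = k
    · rw [if_pos (by omega : -k + (-(N:ℤ)+j-j') = 0), if_pos hb, hb]; ring
    · rw [if_neg (by omega : ¬(-k + (-(N:ℤ)+j-j') = 0)), if_neg hb]; ring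

lemma key1 (N : ℕ) (k : ℤ) (hk1 : -(N:ℤ) ≤ k) (hk2 : k ≤ (N:ℤ)) (τ : ℝ) :
    (∫ t in (0:ℝ)..1, sEm (-k) t * (sGG N (t - τ) : ℂ))
      = -(Complex.I * k / (N:ℂ)) * sEm (-k) τ := by
  have hfun : (fun t : ℝ => sEm (-k) t * (sGG N (t - τ) : ℂ))
      = fun t => ∑ j ∈ range N, ∑ j' ∈ range N, sTerm N k τ j j' t := by
    funext t
    rw [sGG_expand]
    simp only [Finset.mul_sum]
    apply Finset.sum_congr rfl; intro j _
    apply Finset.sum_congr rfl; intro j' _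
    rw [sTerm, sEm_sub ((N:ℤ)+j-j'), sEm_sub (-(N:ℤ)+j-j'),
      ← sEm_mul (-k) ((N:ℤ)+j-j'), ← sEm_mul (-k) (-(N:ℤ)+j-j')]
    ring
  rw [hfun]
  rw [intervalIntegral.integral_finset_sum (fun j _ =>
    (continuous_finset_sum _ (fun j' _ => sTerm_cont N k τ j j')).intervalIntegrable _ _)]
  have hswap : ∀ j ∈ range N, (∫ t in (0:ℝ)..1, ∑ j' ∈ range N, sTerm N k τ j j' t)
      = ∑ j' ∈ range N, ∫ t in (0:ℝ)..1, sTerm N k τ j j' t := fun j _ =>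
    intervalIntegral.integral_finset_sum (fun j' _ => (sTerm_cont N k τ j j').intervalIntegrable _ _)
  rw [Finset.sum_congr rfl hswap]
  rw [Finset.sum_congr rfl (fun j _ => Finset.sum_congr rfl
    (fun j' _ => sTerm_integral N k τ j j' sEm_integral))]
  have hsplit : (∑ j ∈ range N, ∑ j' ∈ range N, (-(Complex.I/(N:ℂ)) * sEm (-k) τ *
        ((if ((N:ℤ)+j-j' = k) then (1:ℂ) else 0) - (if (-(N:ℤ)+j-j' = k) then (1:ℂ) else 0))))
      = -(Complex.I/(N:ℂ)) * sEm (-k) τ *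
        ((∑ j ∈ range N, ∑ j' ∈ range N, (if ((N:ℤ)+j-j' = k) then (1:ℂ) else 0))
          - (∑ j ∈ range N, ∑ j' ∈ range N, (if (-(N:ℤ)+j-j' = k) then (1:ℂ) else 0))) := by
    simp only [mul_sub, Finset.mul_sum, Finset.sum_sub_distrib]
  rw [hsplit]
  have hB : (∑ j ∈ range N, ∑ j' ∈ range N, (if (-(N:ℤ)+j-j' = k) then (1:ℂ) else 0))
      = (((-k).toNat : ℕ) : ℂ) := by
    rw [Finset.sum_comm]
    have : ∀ j' ∈ range N, (∑ j ∈ range N, if (-(N:ℤ)+j-j' = k) then (1:ℂ) else 0)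
        = ∑ j ∈ range N, if ((N:ℤ)+j'-j = -k) then (1:ℂ) else 0 := by
      intro j' _
      exact Finset.sum_congr rfl (fun j _ => if_congr (by omega) rfl rfl)
    rw [Finset.sum_congr rfl this]
    exact countKey N (-k) (by omega)
  rw [hB, countKey N k hk2]
  have hI : ((k.toNat : ℕ) : ℂ) - (((-k).toNat : ℕ) : ℂ) = (k:ℂ) := by
    have := Int.toNat_sub_toNat_neg k
    exact_mod_cast congrArg (Int.cast : ℤ → ℂ) this
  linear_combination (-(Complex.I/(N:ℂ)) * sEm (-k) τ) * hI

lemma sFF_expand (N : ℕ) (s : ℝ) : (sFF N s : ℂ)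
    = (1/(N:ℂ)) * ∑ j ∈ range N, ∑ j' ∈ range N, sEm ((j:ℤ) + -(j':ℤ)) s := by
  have hconj : (starRingEnd ℂ) (sDD N s) = ∑ j' ∈ range N, sEm (-(j':ℤ)) s := by
    rw [sDD, map_sum]
    apply Finset.sum_congr rfl
    intro j' _
    rw [sEm, sEm, ← Complex.exp_conj]
    congr 1
    simp only [map_mul, Complex.conj_I, Complex.conj_ofReal, map_ofNat, map_natCast, map_intCast]
    push_cast
    ring
  have hns : ((sFF N s : ℂ)) = (1 / (N:ℂ)) * (sDD N s * (starRingEnd ℂ) (sDD N s)) := by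
    rw [sFF, Complex.mul_conj]
    push_cast
    ring
  rw [hns, hconj, sDD, Finset.sum_mul_sum]
  congr 1
  apply Finset.sum_congr rfl; intro j _
  apply Finset.sum_congr rfl; intro j' _
  exact sEm_mul _ _ _

lemma intFF (N : ℕ) (τ : ℝ) : (∫ t in (0:ℝ)..1, sFF N (t - τ)) ≤ 1 := by
  have hfun : (fun t : ℝ => ((sFF N (t - τ) : ℝ):ℂ)) = fun t => ∑ j ∈ range N, ∑ j' ∈ range N,
      (1/(N:ℂ)) * (sEm ((j:ℤ) + -(j':ℤ)) t * sEm (-((j:ℤ) + -(j':ℤ))) τ) := by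
    funext t
    rw [sFF_expand]
    simp only [Finset.mul_sum]
    apply Finset.sum_congr rfl; intro j _
    apply Finset.sum_congr rfl; intro j' _
    rw [sEm_sub]
  have hcmplx : (∫ t in (0:ℝ)..1, ((sFF N (t-τ) : ℝ) : ℂ)) = if N = 0 then 0 else 1 := by
    rw [hfun]
    rw [intervalIntegral.integral_finset_sum
      (f := fun (j : ℕ) t => ∑ j' ∈ range N, (1/(N:ℂ)) * (sEm ((j:ℤ) + -(j':ℤ)) t * sEm (-((j:ℤ) + -(j':ℤ))) τ))
      (fun j _ =>
      (continuous_finset_sum _ (fun j' _ =>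
        (continuous_const.mul ((sEm_cont _).mul continuous_const)))).intervalIntegrable _ _)]
    have hswap : ∀ j ∈ range N, (∫ t in (0:ℝ)..1, ∑ j' ∈ range N,
        (1/(N:ℂ)) * (sEm ((j:ℤ) + -(j':ℤ)) t * sEm (-((j:ℤ) + -(j':ℤ))) τ))
        = ∑ j' ∈ range N, ∫ t in (0:ℝ)..1,
            (1/(N:ℂ)) * (sEm ((j:ℤ) + -(j':ℤ)) t * sEm (-((j:ℤ) + -(j':ℤ))) τ) := fun j _ =>
      intervalIntegral.integral_finset_sum (fun j' _ =>
        (continuous_const.mul ((sEm_cont _).mul continuous_const)).intervalIntegrable _ _)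
    rw [Finset.sum_congr rfl hswap]
    have hterm : ∀ j j' : ℕ, (∫ t in (0:ℝ)..1,
        (1/(N:ℂ)) * (sEm ((j:ℤ) + -(j':ℤ)) t * sEm (-((j:ℤ) + -(j':ℤ))) τ))
        = (1/(N:ℂ)) * (if ((j':ℤ) = j) then (1:ℂ) else 0) := by
      intro j j'
      rw [intervalIntegral.integral_const_mul, intervalIntegral.integral_mul_const, sEm_integral]
      by_cases h : (j:ℤ) + -(j':ℤ) = 0
      · rw [if_pos h, if_pos (by omega : (j':ℤ) = j), h]
        simp [sEm]
      · rw [if_neg h, if_neg (by omega : ¬((j':ℤ) = j))]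
        ring
    rw [Finset.sum_congr rfl (fun j _ => Finset.sum_congr rfl (fun j' _ => hterm j j'))]
    have hin : ∀ j ∈ range N, (∑ j' ∈ range N, (1/(N:ℂ)) * (if ((j':ℤ) = j) then (1:ℂ) else 0))
        = (1/(N:ℂ)) := by
      intro j hj
      rw [← Finset.mul_sum, indSum N (j:ℤ), if_pos (by simp at hj; omega)]
      ring
    rw [Finset.sum_congr rfl hin, Finset.sum_const, Finset.card_range]
    rcases Nat.eq_zero_or_pos N with h | h
    · simp [h]
    · rw [if_neg (by omega)]
      have : (N:ℂ) ≠ 0 := by exact_mod_cast Nat.pos_iff_ne_zero.mp h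
      rw [nsmul_eq_mul]
      field_simp
  rw [intervalIntegral.integral_ofReal] at hcmplx
  rcases Nat.eq_zero_or_pos N with h | h
  · rw [if_pos h] at hcmplx
    have : (∫ t in (0:ℝ)..1, sFF N (t-τ)) = 0 := by exact_mod_cast hcmplx
    rw [this]; norm_num
  · rw [if_neg (by omega)] at hcmplx
    have : (∫ t in (0:ℝ)..1, sFF N (t-τ)) = 1 := by exact_mod_cast hcmplx
    rw [this]

lemma intGabs (N : ℕ) (ξ : ℝ) : (∫ t in (0:ℝ)..1, |sGG N (t - ξ)|) ≤ 2 := by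
  have hle : (∫ t in (0:ℝ)..1, |sGG N (t - ξ)|) ≤ ∫ t in (0:ℝ)..1, 2 * sFF N (t - ξ) := by
    apply intervalIntegral.integral_mono_on (by norm_num)
    · exact (((sGG_cont N).comp (by fun_prop)).abs).intervalIntegrable _ _
    · exact (continuous_const.mul ((sFF_cont N).comp (by fun_prop))).intervalIntegrable _ _
    · exact fun t _ => sGG_abs_le N _
  have h2 : (∫ t in (0:ℝ)..1, 2 * sFF N (t - ξ)) = 2 * ∫ t in (0:ℝ)..1, sFF N (t - ξ) := by
    exact intervalIntegral.integral_const_mul _ _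
  have := intFF N ξ
  linarith

lemma bern1D (N : ℕ) (g : ℝ → ℝ) (d : ℤ → ℂ)
    (hg : ∀ t : ℝ, (g t : ℂ) = ∑ k ∈ Icc (-(N:ℤ)) N, d k * sEm (-k) t)
    (A : ℝ) (hA : ∀ t ∈ Set.Icc (0:ℝ) 1, |g t| ≤ A) :
    ∀ x y : ℝ, |g x - g y| ≤ 4 * Real.pi * N * A * |x - y| := by
  have hA0 : 0 ≤ A := le_trans (abs_nonneg _) (hA 0 ⟨le_refl _, zero_le_one⟩)
  set qc : ℝ → ℂ := fun t => ∑ k ∈ Icc (-(N:ℤ)) N, d k * sEm (-k) t with hqcdef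
  set D : ℝ → ℂ := fun ξ => ∑ k ∈ Icc (-(N:ℤ)) N,
    d k * (sEm (-k) ξ * (2 * (Real.pi:ℂ) * Complex.I * ((-k : ℤ):ℂ))) with hDdef
  have hqc : ∀ ξ : ℝ, HasDerivAt qc (D ξ) ξ := by
    intro ξ
    apply HasDerivAt.fun_sum
    intro k _
    have h1 : HasDerivAt (fun t : ℝ => (t : ℂ)) 1 ξ := Complex.ofRealCLM.hasDerivAt
    have h2 := ((h1.const_mul (2 * (Real.pi:ℂ) * Complex.I * ((-k : ℤ):ℂ))).cexp).const_mul (d k)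
    simp only [mul_one] at h2
    exact h2
  have hqcg : ∀ t : ℝ, qc t = (g t : ℂ) := fun t => (hg t).symm
  have hD : ∀ ξ : ℝ, D ξ = 2 * Real.pi * N * ∫ t in (0:ℝ)..1, qc t * (sGG N (t - ξ) : ℂ) := by
    intro ξ
    have hcG : Continuous fun t : ℝ => ((sGG N (t - ξ) : ℝ) : ℂ) :=
      Complex.continuous_ofReal.comp ((sGG_cont N).comp (continuous_sub_right ξ))
    have hfun : (fun t : ℝ => qc t * (sGG N (t - ξ) : ℂ))
        = fun t => ∑ k ∈ Icc (-(N:ℤ)) N, d k * (sEm (-k) t * (sGG N (t - ξ) : ℂ)) := by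
      funext t
      rw [hqcdef]
      rw [Finset.sum_mul]
      apply Finset.sum_congr rfl; intro k _
      ring
    rw [hfun, intervalIntegral.integral_finset_sum
      (f := fun k t => d k * (sEm (-k) t * (sGG N (t - ξ) : ℂ))) (fun k _ =>
      (continuous_const.mul ((sEm_cont _).mul hcG)).intervalIntegrable _ _)]
    have hterm : ∀ k ∈ Icc (-(N:ℤ)) N, (∫ t in (0:ℝ)..1, d k * (sEm (-k) t * (sGG N (t - ξ) : ℂ)))
        = d k * (-(Complex.I * k / (N:ℂ)) * sEm (-k) ξ) := by
      intro k hk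
      rw [Finset.mem_Icc] at hk
      rw [intervalIntegral.integral_const_mul, key1 N k hk.1 hk.2 ξ]
    rw [Finset.sum_congr rfl hterm, hDdef, Finset.mul_sum]
    apply Finset.sum_congr rfl; intro k hk
    rw [Finset.mem_Icc] at hk
    rcases Nat.eq_zero_or_pos N with h | h
    · have hk0 : k = 0 := by omega
      simp [hk0]
    · have hN : (N:ℂ) ≠ 0 := by exact_mod_cast Nat.pos_iff_ne_zero.mp h
      push_cast
      field_simp
  have hDbound : ∀ ξ : ℝ, ‖D ξ‖ ≤ 4 * Real.pi * N * A := by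
    intro ξ
    rw [hD ξ, norm_mul]
    have hc1 : ‖(2 * (Real.pi:ℂ) * (N:ℂ))‖ = 2 * Real.pi * N := by
      rw [show (2 * (Real.pi:ℂ) * (N:ℂ)) = ((2 * Real.pi * N : ℝ) : ℂ) from by push_cast; ring,
        Complex.norm_real, Real.norm_eq_abs, abs_of_nonneg (by positivity)]
    rw [hc1]
    have hIb : ‖∫ t in (0:ℝ)..1, qc t * (sGG N (t - ξ) : ℂ)‖ ≤ 2 * A := by
      calc ‖∫ t in (0:ℝ)..1, qc t * (sGG N (t - ξ) : ℂ)‖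
          ≤ ∫ t in (0:ℝ)..1, ‖qc t * (sGG N (t - ξ) : ℂ)‖ :=
            intervalIntegral.norm_integral_le_integral_norm zero_le_one
        _ ≤ ∫ t in (0:ℝ)..1, A * |sGG N (t - ξ)| := by
            apply intervalIntegral.integral_mono_on zero_le_one
            · apply Continuous.intervalIntegrable
              apply Continuous.norm
              apply Continuous.mul
              · apply continuous_finset_sum
                intro k _
                exact continuous_const.mul (sEm_cont _)
              · exact Complex.continuous_ofReal.comp ((sGG_cont N).comp (continuous_sub_right ξ))
            · exact (continuous_const.mul
                (((sGG_cont N).comp (continuous_sub_right ξ)).abs)).intervalIntegrable _ _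
            · intro t ht
              rw [norm_mul]
              have h1 : ‖qc t‖ ≤ A := by
                rw [hqcg t, Complex.norm_real, Real.norm_eq_abs]
                exact hA t ht
              have h2 : ‖((sGG N (t - ξ) : ℝ) : ℂ)‖ = |sGG N (t - ξ)| := by
                rw [Complex.norm_real, Real.norm_eq_abs]
              rw [h2]
              nlinarith [abs_nonneg (sGG N (t - ξ)), norm_nonneg (qc t)]
        _ = A * ∫ t in (0:ℝ)..1, |sGG N (t - ξ)| := intervalIntegral.integral_const_mul _ _
        _ ≤ A * 2 := mul_le_mul_of_nonneg_left (intGabs N ξ) hA0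
        _ = 2 * A := by ring
    calc 2 * Real.pi * (N:ℝ) * ‖∫ t in (0:ℝ)..1, qc t * (sGG N (t - ξ) : ℂ)‖
        ≤ 2 * Real.pi * (N:ℝ) * (2 * A) := by
          apply mul_le_mul_of_nonneg_left hIb (by positivity)
      _ = 4 * Real.pi * N * A := by ring
  have hgder : ∀ ξ : ℝ, HasDerivAt g ((D ξ).re) ξ := by
    intro ξ
    have h := (Complex.reCLM.hasFDerivAt (x := qc ξ)).comp_hasDerivAt ξ (hqc ξ)
    have hfg : (fun t => Complex.reCLM (qc t)) = g := by
      funext t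
      simp only [Complex.reCLM_apply]
      rw [hqcg t, Complex.ofReal_re]
    have : (⇑Complex.reCLM ∘ qc) = g := hfg
    rw [this] at h
    exact h
  intro x y
  have key := Convex.norm_image_sub_le_of_norm_hasDerivWithin_le
    (f := g) (f' := fun ξ => (D ξ).re) (s := Set.univ) (C := 4 * Real.pi * N * A)
    (fun ξ _ => (hgder ξ).hasDerivWithinAt)
    (fun ξ _ => le_trans (Complex.abs_re_le_norm _) (hDbound ξ))
    convex_univ (Set.mem_univ y) (Set.mem_univ x)
  rw [Real.norm_eq_abs, Real.norm_eq_abs] at key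
  exact key

/-- Discretization bound for a nonnegative bivariate trigonometric polynomial of degree
at most N in each variable: the supremum over [0,1]² is controlled by the maximum over
a uniform M×M grid, provided M > 4πN. -/
theorem stmt7 (N M : ℕ) (hM : 4 * Real.pi * N < M) (Q : ℝ → ℝ → ℝ)
    (hpos : ∀ τ f : ℝ, 0 ≤ Q τ f)
    (hQ : ∃ c : ℤ × ℤ → ℂ, ∀ τ f : ℝ, (Q τ f : ℂ) =
      ∑ k ∈ Finset.Icc (-(N : ℤ)) N, ∑ p ∈ Finset.Icc (-(N : ℤ)) N,
        c (k, p) * Complex.exp (-(2 * Real.pi * Complex.I * (k * τ + p * f)))) :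
    sSup ((fun r : ℝ × ℝ => Q r.1 r.2) '' (Set.Icc 0 1 ×ˢ Set.Icc 0 1)) ≤
      (1 - 4 * Real.pi * N / M)⁻¹ *
        ⨆ l : Fin M × Fin M, Q ((l.1 : ℝ) / M) ((l.2 : ℝ) / M) := by
  obtain ⟨c, hQ⟩ := hQ
  have hpi : 0 < Real.pi := Real.pi_pos
  have hM0 : 0 < M := by
    rcases Nat.eq_zero_or_pos M with h | h
    · subst h
      have h1 : (0:ℝ) ≤ 4 * Real.pi * N := by positivity
      simp at hM
      linarith
    · exact h
  have hMR : (0:ℝ) < M := by exact_mod_cast hM0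
  haveI : Nonempty (Fin M × Fin M) := ⟨(⟨0, hM0⟩, ⟨0, hM0⟩)⟩
  set Gr := ⨆ l : Fin M × Fin M, Q ((l.1 : ℝ) / M) ((l.2 : ℝ) / M) with hGr
  have hGrle : ∀ l : Fin M × Fin M, Q ((l.1 : ℝ)/M) ((l.2 : ℝ)/M) ≤ Gr :=
    fun l => le_ciSup (f := fun l : Fin M × Fin M => Q ((l.1 : ℝ)/M) ((l.2 : ℝ)/M))
      (Set.Finite.bddAbove (Set.finite_range _)) l
  -- periodicity
  have hper1 : ∀ τ f : ℝ, Q (τ + 1) f = Q τ f := by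
    intro τ f
    apply Complex.ofReal_inj.mp
    rw [hQ, hQ]
    apply Finset.sum_congr rfl; intro k _
    apply Finset.sum_congr rfl; intro p _
    congr 1
    have h1 : -(2*(Real.pi:ℂ)*Complex.I*((k:ℂ)*((τ:ℂ)+1)+(p:ℂ)*(f:ℂ)))
        = -(2*(Real.pi:ℂ)*Complex.I*((k:ℂ)*(τ:ℂ)+(p:ℂ)*(f:ℂ))) + ((-k:ℤ):ℂ)*(2*(Real.pi:ℂ)*Complex.I) := by
      push_cast; ring
    have h2 : Complex.exp (-(2*(Real.pi:ℂ)*Complex.I*((k:ℂ)*((τ:ℂ)+1)+(p:ℂ)*(f:ℂ))))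
        = Complex.exp (-(2*(Real.pi:ℂ)*Complex.I*((k:ℂ)*(τ:ℂ)+(p:ℂ)*(f:ℂ)))) := by
      rw [h1, Complex.exp_add, Complex.exp_int_mul_two_pi_mul_I, mul_one]
    push_cast
    push_cast at h2
    exact h2
  have hper2 : ∀ τ f : ℝ, Q τ (f + 1) = Q τ f := by
    intro τ f
    apply Complex.ofReal_inj.mp
    rw [hQ, hQ]
    apply Finset.sum_congr rfl; intro k _
    apply Finset.sum_congr rfl; intro p _
    congr 1
    have h1 : -(2*(Real.pi:ℂ)*Complex.I*((k:ℂ)*(τ:ℂ)+(p:ℂ)*((f:ℂ)+1)))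
        = -(2*(Real.pi:ℂ)*Complex.I*((k:ℂ)*(τ:ℂ)+(p:ℂ)*(f:ℂ))) + ((-p:ℤ):ℂ)*(2*(Real.pi:ℂ)*Complex.I) := by
      push_cast; ring
    have h2 : Complex.exp (-(2*(Real.pi:ℂ)*Complex.I*((k:ℂ)*(τ:ℂ)+(p:ℂ)*((f:ℂ)+1))))
        = Complex.exp (-(2*(Real.pi:ℂ)*Complex.I*((k:ℂ)*(τ:ℂ)+(p:ℂ)*(f:ℂ)))) := by
      rw [h1, Complex.exp_add, Complex.exp_int_mul_two_pi_mul_I, mul_one]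
    push_cast
    push_cast at h2
    exact h2
  -- continuity
  have hcont : ContinuousOn (fun r : ℝ × ℝ => Q r.1 r.2) (Set.Icc 0 1 ×ˢ Set.Icc 0 1) := by
    apply Continuous.continuousOn
    have hfeq : (fun r : ℝ × ℝ => Q r.1 r.2) = fun r : ℝ × ℝ =>
        (∑ k ∈ Finset.Icc (-(N : ℤ)) N, ∑ p ∈ Finset.Icc (-(N : ℤ)) N,
          c (k, p) * Complex.exp (-(2 * Real.pi * Complex.I * (k * r.1 + p * r.2)))).re := by
      funext r
      rw [← hQ r.1 r.2, Complex.ofReal_re]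
    rw [hfeq]
    apply Complex.continuous_re.comp
    apply continuous_finset_sum; intro k _
    apply continuous_finset_sum; intro p _
    exact continuous_const.mul (Complex.continuous_exp.comp (by fun_prop))
  -- maximizer
  have hSne : (Set.Icc (0:ℝ) 1 ×ˢ Set.Icc (0:ℝ) 1).Nonempty :=
    ⟨(0,0), Set.mk_mem_prod (Set.mem_Icc.mpr ⟨le_refl 0, zero_le_one⟩)
      (Set.mem_Icc.mpr ⟨le_refl 0, zero_le_one⟩)⟩
  obtain ⟨z, hz, hmax⟩ := (isCompact_Icc.prod isCompact_Icc).exists_isMaxOn hSne hcont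
  set A := Q z.1 z.2 with hAdef
  have hz1 : z.1 ∈ Set.Icc (0:ℝ) 1 := hz.1
  have hz2 : z.2 ∈ Set.Icc (0:ℝ) 1 := hz.2
  have hA0 : 0 ≤ A := hpos _ _
  have hmax' : ∀ x y : ℝ, x ∈ Set.Icc (0:ℝ) 1 → y ∈ Set.Icc (0:ℝ) 1 → Q x y ≤ A :=
    fun x y hx hy => hmax (Set.mk_mem_prod hx hy)
  -- grid indices
  set n₁ : ℕ := ⌊(M:ℝ) * z.1 + 1/2⌋₊ with hn₁
  set n₂ : ℕ := ⌊(M:ℝ) * z.2 + 1/2⌋₊ with hn₂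
  have hfl : ∀ x : ℝ, x ∈ Set.Icc (0:ℝ) 1 →
      |x - (⌊(M:ℝ) * x + 1/2⌋₊ : ℝ)/M| ≤ 1/(2*M) ∧ (⌊(M:ℝ) * x + 1/2⌋₊ : ℕ) ≤ M := by
    intro x hx
    obtain ⟨hx0, hx1⟩ := hx
    have h0 : (0:ℝ) ≤ (M:ℝ) * x + 1/2 := by positivity
    have hle : ((⌊(M:ℝ) * x + 1/2⌋₊ : ℕ) : ℝ) ≤ (M:ℝ) * x + 1/2 := Nat.floor_le h0
    have hgt : (M:ℝ) * x + 1/2 < (⌊(M:ℝ) * x + 1/2⌋₊ : ℕ) + 1 := Nat.lt_floor_add_one _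
    have e : ((⌊(M:ℝ)*x+1/2⌋₊:ℝ)/M) * M = ((⌊(M:ℝ)*x+1/2⌋₊:ℕ):ℝ) :=
      div_mul_cancel₀ _ (ne_of_gt hMR)
    have e2 : (1/(2*(M:ℝ)))*M = 1/2 := by field_simp
    constructor
    · rw [abs_le]
      constructor
      · nlinarith
      · nlinarith
    · have : ((⌊(M:ℝ) * x + 1/2⌋₊ : ℕ) : ℝ) < M + 1 := by nlinarith
      exact_mod_cast Nat.lt_succ_iff.mp (by exact_mod_cast this)
  obtain ⟨hd1, hn₁M⟩ := hfl z.1 hz1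
  obtain ⟨hd2, hn₂M⟩ := hfl z.2 hz2
  have hτg : ((n₁:ℝ)/M) ∈ Set.Icc (0:ℝ) 1 := by
    constructor
    · positivity
    · rw [div_le_one hMR]; exact_mod_cast hn₁M
  -- Bernstein–Lipschitz in the first coordinate
  have hb1 := bern1D N (fun t => Q t z.2)
    (fun k => ∑ p ∈ Finset.Icc (-(N:ℤ)) N, c (k,p) * Complex.exp (-(2*Real.pi*Complex.I*(p*z.2))))
    (by
      intro t
      rw [hQ]
      apply Finset.sum_congr rfl; intro k _
      rw [Finset.sum_mul]
      apply Finset.sum_congr rfl; intro p _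
      have he : Complex.exp (-(2*(Real.pi:ℂ)*Complex.I*((p:ℂ)*((z.2:ℝ):ℂ))))
          * Complex.exp (2*(Real.pi:ℂ)*Complex.I*((-k:ℤ):ℂ)*((t:ℝ):ℂ))
          = Complex.exp (-(2*(Real.pi:ℂ)*Complex.I*((k:ℂ)*((t:ℝ):ℂ)+(p:ℂ)*((z.2:ℝ):ℂ)))) := by
        rw [← Complex.exp_add]; congr 1; push_cast; ring
      rw [sEm, mul_assoc (c (k,p)), he])
    A (fun t ht => by rw [abs_of_nonneg (hpos _ _)]; exact hmax' t z.2 ht hz2)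
  -- Bernstein–Lipschitz in the second coordinate
  have hb2 := bern1D N (fun t => Q ((n₁:ℝ)/M) t)
    (fun p => ∑ k ∈ Finset.Icc (-(N:ℤ)) N, c (k,p) * Complex.exp (-(2*Real.pi*Complex.I*(k*((n₁:ℝ)/M)))))
    (by
      intro t
      rw [hQ, Finset.sum_comm]
      apply Finset.sum_congr rfl; intro p _
      rw [Finset.sum_mul]
      apply Finset.sum_congr rfl; intro k _
      have he : Complex.exp (-(2*(Real.pi:ℂ)*Complex.I*((k:ℂ)*(((n₁:ℝ):ℂ)/(M:ℂ)))))
          * Complex.exp (2*(Real.pi:ℂ)*Complex.I*((-p:ℤ):ℂ)*((t:ℝ):ℂ))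
          = Complex.exp (-(2*(Real.pi:ℂ)*Complex.I*((k:ℂ)*(((n₁:ℝ)/M:ℝ):ℂ)+(p:ℂ)*((t:ℝ):ℂ)))) := by
        rw [← Complex.exp_add]; congr 1; push_cast; ring
      rw [sEm, mul_assoc (c (k,p)), he])
    A (fun t ht => by rw [abs_of_nonneg (hpos _ _)]; exact hmax' _ t hτg ht)
  have hstep1 : Q z.1 z.2 ≤ Q ((n₁:ℝ)/M) z.2 + 4*Real.pi*N*A/(2*M) := by
    have h1 := hb1 z.1 ((n₁:ℝ)/M)
    have h2 : |Q z.1 z.2 - Q ((n₁:ℝ)/M) z.2| ≤ 4*Real.pi*N*A/(2*M) := by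
      calc |Q z.1 z.2 - Q ((n₁:ℝ)/M) z.2| ≤ 4*Real.pi*N*A * |z.1 - (n₁:ℝ)/M| := h1
        _ ≤ 4*Real.pi*N*A * (1/(2*M)) := by
            apply mul_le_mul_of_nonneg_left hd1 (by positivity)
        _ = 4*Real.pi*N*A/(2*M) := by ring
    have := abs_le.mp h2
    linarith [this.2]
  have hstep2 : Q ((n₁:ℝ)/M) z.2 ≤ Q ((n₁:ℝ)/M) ((n₂:ℝ)/M) + 4*Real.pi*N*A/(2*M) := by
    have h1 := hb2 z.2 ((n₂:ℝ)/M)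
    have h2 : |Q ((n₁:ℝ)/M) z.2 - Q ((n₁:ℝ)/M) ((n₂:ℝ)/M)| ≤ 4*Real.pi*N*A/(2*M) := by
      calc |Q ((n₁:ℝ)/M) z.2 - Q ((n₁:ℝ)/M) ((n₂:ℝ)/M)| ≤ 4*Real.pi*N*A * |z.2 - (n₂:ℝ)/M| := h1
        _ ≤ 4*Real.pi*N*A * (1/(2*M)) := by
            apply mul_le_mul_of_nonneg_left hd2 (by positivity)
        _ = 4*Real.pi*N*A/(2*M) := by ring
    have := abs_le.mp h2
    linarith [this.2]
  -- reduce indices to Fin M using periodicity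
  have key : ∀ n : ℕ, n ≤ M → ∃ l : Fin M,
      ((n:ℝ)/M = ((l:ℕ):ℝ)/M) ∨ ((n:ℝ)/M = ((l:ℕ):ℝ)/M + 1) := by
    intro n hn
    rcases eq_or_lt_of_le hn with h | h
    · refine ⟨⟨0, hM0⟩, Or.inr ?_⟩
      subst h
      simp
      omega
    · exact ⟨⟨n, h⟩, Or.inl rfl⟩
  obtain ⟨l₁, hl₁⟩ := key n₁ hn₁M
  obtain ⟨l₂, hl₂⟩ := key n₂ hn₂M
  have hgrid : Q ((n₁:ℝ)/M) ((n₂:ℝ)/M) ≤ Gr := by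
    have e1 : ∀ y, Q ((n₁:ℝ)/M) y = Q (((l₁:ℕ):ℝ)/M) y := by
      intro y
      rcases hl₁ with h | h
      · rw [h]
      · rw [h, hper1]
    have e2 : ∀ x, Q x ((n₂:ℝ)/M) = Q x (((l₂:ℕ):ℝ)/M) := by
      intro x
      rcases hl₂ with h | h
      · rw [h]
      · rw [h, hper2]
    rw [e1, e2]
    exact hGrle (l₁, l₂)
  have hAG : A ≤ Gr + 4*Real.pi*N*A/M := by
    have harith : 4*Real.pi*(N:ℝ)*A/(2*M) + 4*Real.pi*(N:ℝ)*A/(2*M) = 4*Real.pi*(N:ℝ)*A/M := by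
      field_simp
      ring
    have hAQ : A = Q z.1 z.2 := hAdef
    linarith [hstep1, hstep2, hgrid]
  have h1θ : 0 < 1 - 4*Real.pi*(N:ℝ)/(M:ℝ) := by
    rw [sub_pos, div_lt_one hMR]
    exact hM
  have hfinal : A ≤ (1 - 4*Real.pi*(N:ℝ)/(M:ℝ))⁻¹ * Gr := by
    rw [le_inv_mul_iff₀ h1θ]
    have hexp : (1 - 4*Real.pi*(N:ℝ)/(M:ℝ)) * A = A - 4*Real.pi*(N:ℝ)*A/M := by
      ring
    rw [hexp]
    linarith [hAG]
  apply csSup_le (hSne.image _)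
  rintro y ⟨r, hr, rfl⟩
  exact le_trans (hmax hr) hfinal
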